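/- For the vector field Q(z,w) = (0, zw) on ℂ², the integral curve with initial condition (z₀,w₀) is γ(t) = (z₀, w₀ e^{z₀ t}); consequently if Re z₀ = 0 and z₀ ≠ 0, w₀ ≠ 0 then γ is a nonconstant periodic integral curve, so Q has periodic orbits accumulating at the origin as z₀ → 0 along the imaginary axis. -/

import Mathlib

private lemma expDeriv (z₀ : ℂ) (t : ℝ) :
    HasDerivAt (fun s : ℝ => Complex.exp (z₀ * s)) (z₀ * Complex.exp (z₀ * t)) t := by
  have h : HasDerivAt (fun w : ℂ => Complex.exp (z₀ * w))
      (Complex.exp (z₀ * t) * (z₀ * 1)) (t : ℂ) :=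
    ((hasDerivAt_id (t : ℂ)).const_mul z₀).cexp
  simpa [mul_comm] using h.comp_ofReal

private lemma solution_formula (z₀ w₀ : ℂ) (f g : ℝ → ℂ)
    (hf : ∀ t : ℝ, HasDerivAt f 0 t) (hg : ∀ t : ℝ, HasDerivAt g (f t * g t) t)
    (hf0 : f 0 = z₀) (hg0 : g 0 = w₀) (t : ℝ) :
    f t = z₀ ∧ g t = w₀ * Complex.exp (z₀ * t) := by
  have hfc : ∀ s : ℝ, f s = z₀ := by
    intro s
    have := is_const_of_deriv_eq_zero (f := f)
      (fun x => (hf x).differentiableAt) (fun x => (hf x).deriv) s 0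
    rw [this, hf0]
  refine ⟨hfc t, ?_⟩
  set h : ℝ → ℂ := fun s => g s * Complex.exp (-(z₀ * s)) with hh_def
  have hh : ∀ s : ℝ, HasDerivAt h 0 s := by
    intro s
    have h2 : HasDerivAt (fun s : ℝ => Complex.exp (-(z₀ * s)))
        (-z₀ * Complex.exp (-(z₀ * s))) s := by
      simpa [neg_mul] using expDeriv (-z₀) s
    have h3 := (hg s).mul h2
    refine h3.congr_deriv ?_
    rw [hfc s]; ring
  have hconst : h t = h 0 :=
    is_const_of_deriv_eq_zero (f := h)
      (fun x => (hh x).differentiableAt) (fun x => (hh x).deriv) t 0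
  have h0 : h 0 = w₀ := by simp [hh_def, hg0]
  have ht : g t * Complex.exp (-(z₀ * t)) = w₀ := by
    rw [← h0, ← hconst]
  have := congrArg (· * Complex.exp (z₀ * t)) ht
  simpa [mul_assoc, ← Complex.exp_add] using this

theorem type_two_zero_zero_one_periodic_orbits :
    (∀ z₀ w₀ : ℂ, ∀ f g : ℝ → ℂ,
      (∀ t : ℝ, HasDerivAt f 0 t) → (∀ t : ℝ, HasDerivAt g (f t * g t) t) →
      f 0 = z₀ → g 0 = w₀ →
      ∀ t : ℝ, f t = z₀ ∧ g t = w₀ * Complex.exp (z₀ * t)) ∧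
    (∀ ε : ℝ, 0 < ε → ∃ γ : ℝ → ℂ × ℂ,
      (∀ t : ℝ, HasDerivAt γ (0, (γ t).1 * (γ t).2) t) ∧
      (∃ T : ℝ, 0 < T ∧ ∀ t : ℝ, γ (t + T) = γ t) ∧
      (∃ t₁ t₂ : ℝ, γ t₁ ≠ γ t₂) ∧
      (∀ t : ℝ, ‖γ t‖ < ε)) := by
  constructor
  · exact solution_formula
  · intro ε hε
    have hε2 : (0:ℝ) < ε / 2 := by linarith
    have hεne : (ε : ℂ) ≠ 0 := by exact_mod_cast hε.ne'
    refine ⟨fun t => (((ε / 2 : ℝ) : ℂ) * Complex.I,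
        ((ε / 2 : ℝ) : ℂ) * Complex.exp (((ε / 2 : ℝ) : ℂ) * Complex.I * t)),
      ?_, ?_, ?_, ?_⟩
    · intro t
      have h1 : HasDerivAt (fun _ : ℝ => ((ε / 2 : ℝ) : ℂ) * Complex.I) (0 : ℂ) t :=
        hasDerivAt_const t _
      have h2 : HasDerivAt
          (fun s : ℝ => ((ε / 2 : ℝ) : ℂ) * Complex.exp (((ε / 2 : ℝ) : ℂ) * Complex.I * s))
          (((ε / 2 : ℝ) : ℂ) * (((ε / 2 : ℝ) : ℂ) * Complex.I *
            Complex.exp (((ε / 2 : ℝ) : ℂ) * Complex.I * t))) t :=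
        (expDeriv (((ε / 2 : ℝ) : ℂ) * Complex.I) t).const_mul _
      have := h1.prodMk h2
      simpa [mul_comm, mul_left_comm] using this
    · refine ⟨4 * Real.pi / ε, by positivity, fun t => ?_⟩
      have hzT : ((ε / 2 : ℝ) : ℂ) * Complex.I * ((t + 4 * Real.pi / ε : ℝ) : ℂ)
          = ((ε / 2 : ℝ) : ℂ) * Complex.I * t + 2 * Real.pi * Complex.I := by
        push_cast
        field_simp
        ring
      simp only [Prod.mk.injEq, hzT, Complex.exp_add, Complex.exp_two_pi_mul_I, mul_one]
    · refine ⟨0, 2 * Real.pi / ε, ?_⟩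
      have hzT : ((ε / 2 : ℝ) : ℂ) * Complex.I * ((2 * Real.pi / ε : ℝ) : ℂ)
          = Real.pi * Complex.I := by
        push_cast
        field_simp
      simp only [Prod.mk.injEq, ne_eq, not_and]
      intro _
      rw [hzT, Complex.exp_pi_mul_I]
      push_cast
      simp only [Complex.ofReal_zero, mul_zero, Complex.exp_zero, mul_one, mul_neg]
      intro h
      exact hεne (by linear_combination h)
    · intro t
      have hre : ((((ε / 2 : ℝ) : ℂ) * Complex.I * t).re) = 0 := by simp
      have hnorm1 : ‖((ε / 2 : ℝ) : ℂ) * Complex.I‖ = ε / 2 := by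
        simp [abs_of_pos hε]
      have hnorm2 : ‖((ε / 2 : ℝ) : ℂ) *
          Complex.exp (((ε / 2 : ℝ) : ℂ) * Complex.I * t)‖ = ε / 2 := by
        rw [norm_mul, Complex.norm_exp, hre]
        simp [abs_of_pos hε]
      rw [Prod.norm_def]
      simp only [hnorm1, hnorm2]
      rw [max_self]
      linarith
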